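/- The term algebra R over the blown-up-and-blurred atom structure, i.e. the collection R = {X ⊆ At : for every W ∈ J, X ∩ E^W is finite or E^W ∖ X is finite}, is closed under the operations of the complex algebra Cm F (unions, complements, composition ;, converse ˘, and it contains 1' = {Id} and the unit At), and the resulting relation-type algebra is representable. -/

import Mathlib

/-- A relation-type algebra: a Boolean algebra with composition, converse and identity. -/
structure RelAlgOps (A : Type*) [BooleanAlgebra A] where
  comp : A → A → A
  conv : A → A
  one' : A

/-- `h` is a representation of the relation-type algebra `R` over the equivalence
relation `E`: an isomorphism onto a subalgebra of the full set relation algebra `℘(E)`. -/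
def IsRelRepresentation {A : Type*} [BooleanAlgebra A] (R : RelAlgOps A)
    {X : Type*} (E : X → X → Prop) (h : A → Set (X × X)) : Prop :=
  Function.Injective h ∧
  (∀ a, h a ⊆ {p : X × X | E p.1 p.2}) ∧
  h ⊤ = {p : X × X | E p.1 p.2} ∧
  h ⊥ = ∅ ∧
  (∀ a b, h (a ⊔ b) = h a ∪ h b) ∧
  (∀ a, h aᶜ = {p : X × X | E p.1 p.2} \ h a) ∧
  (∀ a b, h (R.comp a b) =
    {p : X × X | E p.1 p.2 ∧ ∃ y, (p.1, y) ∈ h a ∧ (y, p.2) ∈ h b}) ∧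
  (∀ a, h (R.conv a) = {p : X × X | (p.2, p.1) ∈ h a}) ∧
  h R.one' = {p : X × X | E p.1 p.2 ∧ p.1 = p.2}

/-- A relation-type algebra is representable if it embeds in some `℘(E)`. -/
def IsRepresentable {A : Type*} [BooleanAlgebra A] (R : RelAlgOps A) : Prop :=
  ∃ (X : Type) (E : X → X → Prop), Equivalence E ∧
    ∃ h : A → Set (X × X), IsRelRepresentation R E h

/-- `i, j, k` are evenly distributed: some arrangement `p, q, r` of them
satisfies `r - q = q - p` (over the integers, i.e. `p + r = 2 * q`). -/
def evenly (i j k : ℕ) : Prop :=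
  ∃ p q r : ℕ, ({p, q, r} : Set ℕ) = {i, j, k} ∧ p + r = 2 * q

section Atoms
variable (I : Type) [Fintype I] [DecidableEq I]

/-- The two-element subsets of `I` (the blurs). -/
def TwoSet := {W : Finset I // W.card = 2}

/-- `H = {(i, P, W) : P ∈ W}`. -/
def Hset := {x : ℕ × I × TwoSet I // x.2.1 ∈ x.2.2.val}

/-- The atoms: `H` together with the identity atom. -/
def Atoms := Hset I ⊕ Unit

/-- The consistency (forbidden triple) relation on the atoms. -/
def ConTriple : Atoms I → Atoms I → Atoms I → Prop
  | Sum.inr _, b, c => b = c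
  | a, Sum.inr _, c => a = c
  | a, b, Sum.inr _ => a = b
  | Sum.inl a, Sum.inl b, Sum.inl c =>
      (a.val.2.2.val ∩ b.val.2.2.val ∩ c.val.2.2.val = ∅) ∨
      (evenly a.val.1 b.val.1 c.val.1 ∧
        ¬ (a.val.2.1 = b.val.2.1 ∧ b.val.2.1 = c.val.2.1))

/-- Composition in the complex algebra `Cm F`. -/
def cmComp (X Y : Set (Atoms I)) : Set (Atoms I) :=
  {c | ∃ a ∈ X, ∃ b ∈ Y, ConTriple I a b c}

/-- The complex algebra `Cm F` of the blown-up-and-blurred atom structure. -/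
def cmAlg : RelAlgOps (Set (Atoms I)) where
  comp := cmComp I
  conv := id
  one' := {Sum.inr ()}

end Atoms

section Term
variable (I : Type) [Fintype I] [DecidableEq I]

/-- The block `E^W = {(i, P, W) : i ∈ ℕ, P ∈ W}` of the second partition. -/
def Eset (W : TwoSet I) : Set (Atoms I) :=
  {a | ∃ x : Hset I, a = Sum.inl x ∧ x.val.2.2 = W}

/-- The universe of the term algebra: sets intersecting each `E^W` finitely or
cofinitely (within `E^W`). -/
def TermAlg : Set (Set (Atoms I)) :=
  {X | ∀ W : TwoSet I, (X ∩ Eset I W).Finite ∨ (Eset I W \ X).Finite}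

end Term



section Basic
variable {I : Type} [Fintype I] [DecidableEq I]
set_option linter.unusedSectionVars false

lemma evenly_swap₁ {i j k : ℕ} (h : evenly i j k) : evenly j i k := by
  obtain ⟨p, q, r, hs, he⟩ := h
  exact ⟨p, q, r, by rw [hs, Set.insert_comm], he⟩

lemma evenly_swap₂ {i j k : ℕ} (h : evenly i j k) : evenly i k j := by
  obtain ⟨p, q, r, hs, he⟩ := h
  exact ⟨p, q, r, by rw [hs, Set.pair_comm], he⟩

lemma evenly_of_eq {i j k : ℕ} (h : i + j = 2 * k) : evenly i j k :=
  ⟨i, k, j, by rw [Set.pair_comm k j], h⟩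

lemma mem_of_tripleSet {p q r i j k : ℕ} (hs : ({p, q, r} : Set ℕ) = {i, j, k})
    (x : ℕ) (hx : x = p ∨ x = q ∨ x = r) : x = i ∨ x = j ∨ x = k := by
  have : x ∈ ({i, j, k} : Set ℕ) := by
    rw [← hs]; rcases hx with h | h | h <;> simp [h]
  simpa using this

lemma evenly_bound {i j k : ℕ} (h : evenly i j k) : k ≤ 2 * (i + j) := by
  obtain ⟨p, q, r, hs, he⟩ := h
  have hk : k ∈ ({p, q, r} : Set ℕ) := by rw [hs]; simp
  have hp := mem_of_tripleSet hs p (by simp)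
  have hq := mem_of_tripleSet hs q (by simp)
  have hr := mem_of_tripleSet hs r (by simp)
  have hij : i ∈ ({p, q, r} : Set ℕ) ∧ j ∈ ({p, q, r} : Set ℕ) := by
    constructor <;> rw [hs] <;> simp
  simp only [Set.mem_insert_iff, Set.mem_singleton_iff] at hk hij
  -- all of p q r are among i j k; k is among p q r
  rcases hk with hk | hk | hk <;> rcases hp with hp | hp | hp <;>
    rcases hq with hq | hq | hq <;> rcases hr with hr | hr | hr <;>
    rcases hij.1 with h1 | h1 | h1 <;> rcases hij.2 with h2 | h2 | h2 <;> omega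

lemma conTriple_inl_iff {a b c : Hset I} :
    ConTriple I (Sum.inl a) (Sum.inl b) (Sum.inl c) ↔
      (a.val.2.2.val ∩ b.val.2.2.val ∩ c.val.2.2.val = ∅) ∨
      (evenly a.val.1 b.val.1 c.val.1 ∧
        ¬ (a.val.2.1 = b.val.2.1 ∧ b.val.2.1 = c.val.2.1)) := Iff.rfl

lemma mem_Eset_inl {h : Hset I} {W : TwoSet I} :
    (Sum.inl h : Atoms I) ∈ Eset I W ↔ h.val.2.2 = W := by
  constructor
  · rintro ⟨x, hx, hw⟩
    obtain rfl : h = x := by exact Sum.inl.inj hx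
    exact hw
  · intro hw; exact ⟨h, rfl, hw⟩

lemma notmem_Eset_inr {W : TwoSet I} : (Sum.inr () : Atoms I) ∉ Eset I W := by
  rintro ⟨x, hx, -⟩; exact Sum.inr_ne_inl hx

lemma TwoSet.exists_mem (W : TwoSet I) : ∃ P, P ∈ W.val := by
  have : 0 < W.val.card := by rw [W.prop]; norm_num
  obtain ⟨P, hP⟩ := Finset.card_pos.mp this
  exact ⟨P, hP⟩

lemma TwoSet.exists_ne (W : TwoSet I) (R : I) : ∃ Q ∈ W.val, Q ≠ R := by
  have : 1 < W.val.card := by rw [W.prop]; norm_num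
  obtain ⟨a, ha, b, hb, hab⟩ := Finset.one_lt_card.mp this
  by_cases h : a = R
  · exact ⟨b, hb, fun hbR => hab (by rw [h, hbR])⟩
  · exact ⟨a, ha, h⟩

lemma exists_disjoint_twoSet (hI : 6 ≤ Fintype.card I) (A B : TwoSet I) :
    ∃ W : TwoSet I, W.val ∩ (A.val ∪ B.val) = ∅ := by
  have hcard : 2 ≤ (Finset.univ \ (A.val ∪ B.val)).card := by
    have h1 : (A.val ∪ B.val).card ≤ 4 := by
      calc (A.val ∪ B.val).card ≤ A.val.card + B.val.card := Finset.card_union_le _ _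
        _ = 4 := by rw [A.prop, B.prop]
    have := Finset.card_sdiff_of_subset (Finset.subset_univ (A.val ∪ B.val))
    rw [Finset.card_univ] at this
    omega
  obtain ⟨t, hts, htc⟩ := Finset.exists_subset_card_eq hcard
  refine ⟨⟨t, htc⟩, ?_⟩
  apply Finset.eq_empty_of_forall_notMem
  intro x hx
  rw [Finset.mem_inter] at hx
  have := hts hx.1
  rw [Finset.mem_sdiff] at this
  exact this.2 hx.2

/-- index of an atom -/
def atomIdx : Atoms I → ℕ := Sum.elim (fun h => h.val.1) (fun _ => 0)

lemma Eset_infinite (V : TwoSet I) : (Eset I V).Infinite := by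
  obtain ⟨P, hP⟩ := TwoSet.exists_mem V
  apply Set.infinite_of_injective_forall_mem
    (f := fun k : ℕ => (Sum.inl ⟨(k, P, V), hP⟩ : Atoms I))
  · intro a b hab
    have := Sum.inl.inj hab
    exact congrArg (fun x : Hset I => x.val.1) this
  · intro k; exact ⟨_, rfl, rfl⟩

lemma finite_small_idx (V : TwoSet I) (K : ℕ) :
    {a : Atoms I | a ∈ Eset I V ∧ atomIdx a ≤ K}.Finite := by
  apply Set.Finite.subset (((Finset.range (K+1)) ×ˢ (Finset.univ : Finset I)).finite_toSet.image
    (fun p : ℕ × I => if h : p.2 ∈ V.val then (Sum.inl ⟨(p.1, p.2, V), h⟩ : Atoms I)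
      else Sum.inr ()))
  rintro a ⟨⟨x, rfl, hW⟩, hidx⟩
  refine ⟨(x.val.1, x.val.2.1), ?_, ?_⟩
  · simp only [Finset.coe_product, Set.mem_prod, Finset.mem_coe, Finset.mem_range,
      Finset.mem_univ, and_true]
    simp only [atomIdx, Sum.elim_inl] at hidx
    omega
  · have hmem : x.val.2.1 ∈ V.val := by rw [← hW]; exact x.property
    simp only [dif_pos hmem]
    congr 1
    apply Subtype.ext
    show (x.val.1, x.val.2.1, V) = x.val
    rw [← hW]
lemma cofinite_tail {V : TwoSet I} {S : Set (Atoms I)} (K : ℕ)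
    (h : ∀ x : Hset I, K < x.val.1 → x.val.2.2 = V → Sum.inl x ∈ S) :
    (Eset I V \ S).Finite := by
  apply (finite_small_idx V K).subset
  rintro a ⟨ha, hna⟩
  refine ⟨ha, ?_⟩
  obtain ⟨x, rfl, hW⟩ := ha
  simp only [atomIdx, Sum.elim_inl]
  by_contra hgt
  exact hna (h x (by omega) hW)

lemma good_of_cofinite {S : TwoSet I} {X : Set (Atoms I)} (h : (Eset I S \ X).Finite) :
    ∃ N, ∀ x : Hset I, N < x.val.1 → x.val.2.2 = S → Sum.inl x ∈ X := by
  obtain ⟨N, hN⟩ := (h.image atomIdx).bddAbove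
  refine ⟨N, fun x hx hW => ?_⟩
  by_contra hnx
  have : atomIdx (Sum.inl x : Atoms I) ∈ atomIdx '' (Eset I S \ X) :=
    ⟨Sum.inl x, ⟨⟨x, rfl, hW⟩, hnx⟩, rfl⟩
  have := hN this
  simp only [atomIdx, Sum.elim_inl] at this
  omega

lemma exists_mem_inter_of_cofinite {S : TwoSet I} {X : Set (Atoms I)}
    (h : (Eset I S \ X).Finite) : ∃ x : Hset I, x.val.2.2 = S ∧ Sum.inl x ∈ X := by
  obtain ⟨N, hN⟩ := good_of_cofinite h
  obtain ⟨P, hP⟩ := TwoSet.exists_mem S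
  exact ⟨⟨(N+1, P, S), hP⟩, rfl, hN _ (Nat.lt_succ_self N) rfl⟩

end Basic

section Labels
variable (I : Type) [Fintype I] [DecidableEq I]

/-- Edge labels: an atom of `H`, or a blur label for a two-set `W`. -/
abbrev Lab := Hset I ⊕ TwoSet I

/-- The blur of a label. -/
def blur : Lab I → TwoSet I
  | Sum.inl h => h.val.2.2
  | Sum.inr W => W

/-- Consistency of label triangles. -/
def LCon : Lab I → Lab I → Lab I → Prop
  | Sum.inl a, Sum.inl b, Sum.inl c => ConTriple I (Sum.inl a) (Sum.inl b) (Sum.inl c)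
  | Sum.inl a, Sum.inl b, Sum.inr V => a.val.2.2.val ∩ b.val.2.2.val ∩ V.val = ∅
  | Sum.inl a, Sum.inr Z, Sum.inl c => a.val.2.2.val ∩ Z.val ∩ c.val.2.2.val = ∅
  | Sum.inr S, Sum.inl b, Sum.inl c => S.val ∩ b.val.2.2.val ∩ c.val.2.2.val = ∅
  | _, _, _ => True

variable {I}
set_option linter.unusedSectionVars false
set_option linter.unreachableTactic false
set_option linter.unusedTactic false

lemma inter3_perm₁ {a b c : Finset I} (h : a ∩ b ∩ c = ∅) : b ∩ a ∩ c = ∅ := by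
  rwa [Finset.inter_comm b a]

lemma inter3_perm₂ {a b c : Finset I} (h : a ∩ b ∩ c = ∅) : a ∩ c ∩ b = ∅ := by
  rwa [Finset.inter_assoc, Finset.inter_comm c b, ← Finset.inter_assoc]

lemma conTriple_swap₁ {a b c : Hset I}
    (h : ConTriple I (Sum.inl a) (Sum.inl b) (Sum.inl c)) :
    ConTriple I (Sum.inl b) (Sum.inl a) (Sum.inl c) := by
  rw [conTriple_inl_iff] at h ⊢
  rcases h with h | ⟨he, hne⟩
  · exact Or.inl (inter3_perm₁ h)
  · refine Or.inr ⟨evenly_swap₁ he, fun ⟨h1, h2⟩ => hne ⟨h1.symm, h1.trans h2⟩⟩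

lemma conTriple_swap₂ {a b c : Hset I}
    (h : ConTriple I (Sum.inl a) (Sum.inl b) (Sum.inl c)) :
    ConTriple I (Sum.inl a) (Sum.inl c) (Sum.inl b) := by
  rw [conTriple_inl_iff] at h ⊢
  rcases h with h | ⟨he, hne⟩
  · exact Or.inl (inter3_perm₂ h)
  · refine Or.inr ⟨evenly_swap₂ he, fun ⟨h1, h2⟩ => hne ⟨h1.trans h2, h2.symm⟩⟩

lemma lcon_swap₁ {x y z : Lab I} (h : LCon I x y z) : LCon I y x z := by
  rcases x with a | S <;> rcases y with b | Z <;> rcases z with c | V <;>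
    simp only [LCon] at h ⊢ <;> first
  | exact conTriple_swap₁ h
  | exact inter3_perm₁ h
  | trivial

lemma lcon_swap₂ {x y z : Lab I} (h : LCon I x y z) : LCon I x z y := by
  rcases x with a | S <;> rcases y with b | Z <;> rcases z with c | V <;>
    simp only [LCon] at h ⊢ <;> first
  | exact conTriple_swap₂ h
  | exact inter3_perm₂ h
  | trivial

/-- `LCon` holds whenever at least two of the labels are blurs. -/
lemma lcon_of_two_blurs₁ {x : Lab I} (S V : TwoSet I) : LCon I x (Sum.inr S) (Sum.inr V) := by
  rcases x with a | Z <;> trivial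

lemma lcon_of_two_blurs₂ {x : Lab I} (S V : TwoSet I) : LCon I (Sum.inr S) x (Sum.inr V) := by
  rcases x with a | Z <;> trivial

lemma lcon_of_two_blurs₃ {x : Lab I} (S V : TwoSet I) : LCon I (Sum.inr S) (Sum.inr V) x := by
  rcases x with a | Z <;> trivial

/-- the disjointness needed in triangles with a fresh blur `W` -/
lemma lcon_blur_right {x y : Lab I} {W : TwoSet I}
    (h : W.val ∩ ((blur I x).val ∪ (blur I y).val) = ∅) : LCon I x y (Sum.inr W) := by
  rcases x with a | S
  · rcases y with b | Z
    · show a.val.2.2.val ∩ b.val.2.2.val ∩ W.val = ∅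
      apply Finset.eq_empty_of_forall_notMem
      intro u hu
      simp only [Finset.mem_inter] at hu
      have : u ∈ W.val ∩ ((blur I (Sum.inl a : Lab I)).val ∪ (blur I (Sum.inl b : Lab I)).val) := by
        simp only [Finset.mem_inter, Finset.mem_union]
        exact ⟨hu.2, Or.inl hu.1.1⟩
      rw [h] at this
      exact absurd this (Finset.notMem_empty u)
    · trivial
  · exact lcon_of_two_blurs₂ _ _

lemma lcon_mid_blur {u v : Lab I} {W : TwoSet I}
    (h : W.val ∩ (blur I v).val = ∅) : LCon I u (Sum.inr W) v := by
  rcases u with a | S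
  · rcases v with c | V
    · show a.val.2.2.val ∩ W.val ∩ c.val.2.2.val = ∅
      apply Finset.eq_empty_of_forall_notMem
      intro u hu
      simp only [Finset.mem_inter] at hu
      have : u ∈ W.val ∩ (blur I (Sum.inl c : Lab I)).val := Finset.mem_inter.mpr ⟨hu.1.2, hu.2⟩
      rw [h] at this
      exact absurd this (Finset.notMem_empty u)
    · trivial
  · exact lcon_of_two_blurs₃ _ _

lemma lcon_last_blur {u v : Lab I} {W : TwoSet I}
    (h : W.val ∩ (blur I v).val = ∅) : LCon I u v (Sum.inr W) := by
  rcases u with a | S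
  · rcases v with c | V
    · show a.val.2.2.val ∩ c.val.2.2.val ∩ W.val = ∅
      apply Finset.eq_empty_of_forall_notMem
      intro u hu
      simp only [Finset.mem_inter] at hu
      have : u ∈ W.val ∩ (blur I (Sum.inl c : Lab I)).val := Finset.mem_inter.mpr ⟨hu.2, hu.1.2⟩
      rw [h] at this
      exact absurd this (Finset.notMem_empty u)
    · exact lcon_of_two_blurs₁ _ _
  · exact lcon_of_two_blurs₂ _ _

/-- A witness request: two parent vertices, two labels, and a fresh blur. -/
abbrev Req (I : Type) [Fintype I] [DecidableEq I] := ℕ × ℕ × Lab I × Lab I × TwoSet I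

instance : Fintype (TwoSet I) := by unfold TwoSet; infer_instance
instance : Countable (Hset I) := by unfold Hset; infer_instance

open Classical in
/-- The label of the edge `{s, t}` (for `s < t`), built by recursion on `t` from the
stream of requests `f`. -/
noncomputable def labAux (f : ℕ → Req I) (t : ℕ) (s : ℕ) : Lab I :=
  if h1 : max (f t).1 (f t).2.1 < t then
    if h2 : (f t).2.2.2.2.val ∩ ((blur I (f t).2.2.1).val ∪ (blur I (f t).2.2.2.1).val) = ∅
        ∧ ((f t).1 = (f t).2.1 → (f t).2.2.1 = (f t).2.2.2.1)
        ∧ ((f t).1 ≠ (f t).2.1 →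
            LCon I (f t).2.2.1 (f t).2.2.2.1
              (labAux f (max (f t).1 (f t).2.1) (min (f t).1 (f t).2.1)))
    then (if s = (f t).1 then (f t).2.2.1
          else if s = (f t).2.1 then (f t).2.2.2.1 else Sum.inr (f t).2.2.2.2)
    else Sum.inr (f t).2.2.2.2
  else Sum.inr (f t).2.2.2.2
termination_by t
decreasing_by all_goals exact h1

open Classical in
/-- The request at time `t` is valid. -/
def ReqValid (f : ℕ → Req I) (t : ℕ) : Prop :=
  max (f t).1 (f t).2.1 < t ∧
  ((f t).2.2.2.2.val ∩ ((blur I (f t).2.2.1).val ∪ (blur I (f t).2.2.2.1).val) = ∅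
    ∧ ((f t).1 = (f t).2.1 → (f t).2.2.1 = (f t).2.2.2.1)
    ∧ ((f t).1 ≠ (f t).2.1 →
        LCon I (f t).2.2.1 (f t).2.2.2.1
          (labAux f (max (f t).1 (f t).2.1) (min (f t).1 (f t).2.1))))

lemma labAux_of_valid {f : ℕ → Req I} {t : ℕ} (h : ReqValid f t) (s : ℕ) :
    labAux f t s = (if s = (f t).1 then (f t).2.2.1
          else if s = (f t).2.1 then (f t).2.2.2.1 else Sum.inr (f t).2.2.2.2) := by
  rw [labAux, dif_pos h.1, dif_pos h.2]

lemma labAux_of_invalid {f : ℕ → Req I} {t : ℕ} (h : ¬ ReqValid f t) (s : ℕ) :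
    labAux f t s = Sum.inr (f t).2.2.2.2 := by
  rw [labAux]
  by_cases h1 : max (f t).1 (f t).2.1 < t
  · rw [dif_pos h1]
    have h2 : ¬ _ := fun h2 => h ⟨h1, h2⟩
    rw [dif_neg h2]
  · rw [dif_neg h1]

/-- The (symmetric) edge labeling. -/
noncomputable def edge (f : ℕ → Req I) (x y : ℕ) : Lab I :=
  labAux f (max x y) (min x y)

lemma edge_symm (f : ℕ → Req I) (x y : ℕ) : edge f x y = edge f y x := by
  rw [edge, edge, max_comm, min_comm]

lemma edge_eq_labAux (f : ℕ → Req I) {x t : ℕ} (h : x < t) : edge f x t = labAux f t x := by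
  rw [edge, max_eq_right h.le, min_eq_left h.le]

lemma triangle_core (f : ℕ → Req I) {x y t : ℕ} (hx : x < t) (hy : y < t) (hxy : x ≠ y) :
    LCon I (edge f x y) (edge f y t) (edge f x t) := by
  rw [edge_eq_labAux f hx, edge_eq_labAux f hy]
  by_cases hv : ReqValid f t
  · rw [labAux_of_valid hv, labAux_of_valid hv]
    obtain ⟨h1, hdisj, heq, hL⟩ := hv
    have hd1 : (f t).2.2.2.2.val ∩ (blur I (f t).2.2.1).val = ∅ := by
      apply Finset.eq_empty_of_forall_notMem
      intro u hu
      rw [Finset.mem_inter] at hu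
      have : u ∈ (f t).2.2.2.2.val ∩ ((blur I (f t).2.2.1).val ∪ (blur I (f t).2.2.2.1).val) :=
        Finset.mem_inter.mpr ⟨hu.1, Finset.mem_union_left _ hu.2⟩
      rw [hdisj] at this
      exact absurd this (Finset.notMem_empty u)
    have hd2 : (f t).2.2.2.2.val ∩ (blur I (f t).2.2.2.1).val = ∅ := by
      apply Finset.eq_empty_of_forall_notMem
      intro u hu
      rw [Finset.mem_inter] at hu
      have : u ∈ (f t).2.2.2.2.val ∩ ((blur I (f t).2.2.1).val ∪ (blur I (f t).2.2.2.1).val) :=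
        Finset.mem_inter.mpr ⟨hu.1, Finset.mem_union_right _ hu.2⟩
      rw [hdisj] at this
      exact absurd this (Finset.notMem_empty u)
    by_cases hxa : x = (f t).1
    · rw [if_pos hxa]
      by_cases hya : y = (f t).1
      · exact absurd (hxa.trans hya.symm) hxy
      · rw [if_neg hya]
        by_cases hyb : y = (f t).2.1
        · rw [if_pos hyb]
          have hab : (f t).1 ≠ (f t).2.1 := fun h => hxy (by rw [hxa, hyb, h])
          have hE : edge f x y = labAux f (max (f t).1 (f t).2.1) (min (f t).1 (f t).2.1) := by
            rw [edge, hxa, hyb]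
          rw [hE]
          exact lcon_swap₂ (lcon_swap₁ (lcon_swap₂ (hL hab)))
        · rw [if_neg hyb]
          exact lcon_mid_blur hd1
    · rw [if_neg hxa]
      by_cases hxb : x = (f t).2.1
      · rw [if_pos hxb]
        by_cases hya : y = (f t).1
        · rw [if_pos hya]
          have hab : (f t).1 ≠ (f t).2.1 := fun h => hxy (by rw [hxb, hya, h])
          have hE : edge f x y = labAux f (max (f t).1 (f t).2.1) (min (f t).1 (f t).2.1) := by
            rw [edge_symm, edge, hya, hxb]
          rw [hE]
          -- need : LCon (e) ℓ1 ℓ2 from LCon ℓ1 ℓ2 e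
          exact lcon_swap₁ (lcon_swap₂ (hL hab))
        · rw [if_neg hya]
          by_cases hyb : y = (f t).2.1
          · exact absurd (hxb.trans hyb.symm) hxy
          · rw [if_neg hyb]
            exact lcon_mid_blur hd2
      · rw [if_neg hxb]
        by_cases hya : y = (f t).1
        · rw [if_pos hya]
          exact lcon_last_blur hd1
        · rw [if_neg hya]
          by_cases hyb : y = (f t).2.1
          · rw [if_pos hyb]
            exact lcon_last_blur hd2
          · rw [if_neg hyb]
            exact lcon_of_two_blurs₁ _ _
  · rw [labAux_of_invalid hv, labAux_of_invalid hv]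
    exact lcon_of_two_blurs₁ _ _

lemma triangle (f : ℕ → Req I) {x y z : ℕ} (hxy : x ≠ y) (hyz : y ≠ z) (hxz : x ≠ z) :
    LCon I (edge f x y) (edge f y z) (edge f x z) := by
  have htri : (x < z ∧ y < z) ∨ (x < y ∧ z < y) ∨ (y < x ∧ z < x) := by omega
  rcases htri with ⟨h1, h2⟩ | ⟨h1, h2⟩ | ⟨h1, h2⟩
  · exact triangle_core f h1 h2 hxy
  · have := triangle_core f h1 h2 hxz
    -- LCon (e x z) (e z y) (e x y)
    have := lcon_swap₁ (lcon_swap₂ (lcon_swap₁ this))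
    -- hopefully LCon (e x y) (e z y) (e x z)? recompute below
    rwa [edge_symm f z y] at this
  · have := triangle_core f h1 h2 hyz
    -- LCon (e y z) (e z x) (e y x)
    have := lcon_swap₁ (lcon_swap₂ this)
    rwa [edge_symm f z x, edge_symm f y x] at this

lemma twoSet_nonempty (hI : 6 ≤ Fintype.card I) : Nonempty (TwoSet I) := by
  have : 2 ≤ (Finset.univ : Finset I).card := by rw [Finset.card_univ]; omega
  obtain ⟨t, -, htc⟩ := Finset.exists_subset_card_eq this
  exact ⟨⟨t, htc⟩⟩

lemma exists_stream (hI : 6 ≤ Fintype.card I) :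
    ∃ f : ℕ → Req I, ∀ (r : Req I) (N : ℕ), ∃ n, N < n ∧ f n = r := by
  have hne : Nonempty (TwoSet I) := twoSet_nonempty hI
  have : Nonempty (Req I) := by
    obtain ⟨W⟩ := hne
    exact ⟨(0, 0, Sum.inr W, Sum.inr W, W)⟩
  obtain ⟨g, hg⟩ := exists_surjective_nat (Req I)
  refine ⟨fun n => g (Nat.unpair n).2, fun r N => ?_⟩
  obtain ⟨m, hm⟩ := hg r
  refine ⟨Nat.pair (N + 1) m, ?_, ?_⟩
  · have := Nat.left_le_pair (N + 1) m
    omega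
  · show g (Nat.unpair (Nat.pair (N + 1) m)).2 = r
    rw [Nat.unpair_pair]
    exact hm

lemma sat (hI : 6 ≤ Fintype.card I) {f : ℕ → Req I}
    (hf : ∀ (r : Req I) (N : ℕ), ∃ n, N < n ∧ f n = r) {x z : ℕ} (hxz : x ≠ z)
    {ℓ1 ℓ2 : Lab I} (hL : LCon I ℓ1 ℓ2 (edge f x z)) :
    ∃ y, x ≠ y ∧ z ≠ y ∧ edge f x y = ℓ1 ∧ edge f y z = ℓ2 := by
  obtain ⟨W, hW⟩ := exists_disjoint_twoSet hI (blur I ℓ1) (blur I ℓ2)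
  obtain ⟨n, hn, hfn⟩ := hf (x, z, ℓ1, ℓ2, W) (max x z)
  have hx : x < n := lt_of_le_of_lt (le_max_left _ _) hn
  have hz : z < n := lt_of_le_of_lt (le_max_right _ _) hn
  have hv : ReqValid f n := by
    unfold ReqValid
    rw [hfn]
    exact ⟨by simpa using hn, hW, fun h => absurd h hxz, fun _ => hL⟩
  refine ⟨n, Nat.ne_of_lt hx, Nat.ne_of_lt hz, ?_, ?_⟩
  · rw [edge_eq_labAux f hx, labAux_of_valid hv, hfn]
    exact if_pos rfl
  · rw [edge_symm, edge_eq_labAux f hz, labAux_of_valid hv, hfn]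
    rw [if_neg (show z ≠ x from Ne.symm hxz), if_pos rfl]

lemma sat0 (hI : 6 ≤ Fintype.card I) {f : ℕ → Req I}
    (hf : ∀ (r : Req I) (N : ℕ), ∃ n, N < n ∧ f n = r) (x : ℕ) (ℓ : Lab I) :
    ∃ y, x ≠ y ∧ edge f x y = ℓ := by
  obtain ⟨W, hW⟩ := exists_disjoint_twoSet hI (blur I ℓ) (blur I ℓ)
  obtain ⟨n, hn, hfn⟩ := hf (x, x, ℓ, ℓ, W) x
  have hv : ReqValid f n := by
    unfold ReqValid
    rw [hfn]
    exact ⟨by simpa using hn, hW, fun _ => rfl, fun h => absurd rfl h⟩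
  refine ⟨n, Nat.ne_of_lt hn, ?_⟩
  rw [edge_eq_labAux f hn, labAux_of_valid hv, hfn]
  exact if_pos rfl

/-- Semantics of an optional edge label on a subset of the atoms (`none` = identity). -/
def Mlab : Option (Lab I) → Set (Atoms I) → Prop
  | none, X => Sum.inr () ∈ X
  | some (Sum.inl h), X => Sum.inl h ∈ X
  | some (Sum.inr W), X => (Eset I W \ X).Finite

lemma conTriple_inr_left (b c : Atoms I) : ConTriple I (Sum.inr ()) b c ↔ b = c := by
  cases b <;> cases c <;> exact Iff.rfl

lemma conTriple_inr_mid (a : Hset I) (c : Atoms I) :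
    ConTriple I (Sum.inl a) (Sum.inr ()) c ↔ Sum.inl a = c := by
  cases c <;> exact Iff.rfl

lemma conTriple_inr_right (a b : Hset I) :
    ConTriple I (Sum.inl a) (Sum.inl b) (Sum.inr ()) ↔ (Sum.inl a : Atoms I) = Sum.inl b :=
  Iff.rfl

/-- H5 : atom in `X`, `Y` blurred at `Z`: the composition is cofinite in every block. -/
lemma comp_cof_atom_blur {X Y : Set (Atoms I)} {a : Hset I} (ha : Sum.inl a ∈ X)
    {Z : TwoSet I} (hY : (Eset I Z \ Y).Finite) (V : TwoSet I) :
    (Eset I V \ cmComp I X Y).Finite := by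
  obtain ⟨N, hN⟩ := good_of_cofinite hY
  apply cofinite_tail (K := a.val.1 + N)
  intro c hk _
  set i := a.val.1 with hi
  set k := c.val.1 with hkk
  obtain ⟨Q, hQ, hQne⟩ := TwoSet.exists_ne Z c.val.2.1
  have hjk : i + (2 * k - i) = 2 * k := by omega
  refine ⟨Sum.inl a, ha, Sum.inl ⟨(2 * k - i, Q, Z), hQ⟩, hN _ (by show N < 2 * k - i; omega) rfl, ?_⟩
  exact Or.inr ⟨evenly_of_eq hjk, fun h => hQne h.2⟩

/-- H6 : `X` blurred at `S`, atom in `Y`: the composition is cofinite in every block. -/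
lemma comp_cof_blur_atom {X Y : Set (Atoms I)} {S : TwoSet I}
    (hX : (Eset I S \ X).Finite) {b : Hset I} (hb : Sum.inl b ∈ Y) (V : TwoSet I) :
    (Eset I V \ cmComp I X Y).Finite := by
  obtain ⟨N, hN⟩ := good_of_cofinite hX
  apply cofinite_tail (K := b.val.1 + N)
  intro c hk _
  set j := b.val.1 with hj
  set k := c.val.1 with hkk
  obtain ⟨P, hP, hPne⟩ := TwoSet.exists_ne S b.val.2.1
  have hjk : (2 * k - j) + j = 2 * k := by omega
  refine ⟨Sum.inl ⟨(2 * k - j, P, S), hP⟩, hN _ (by show N < 2 * k - j; omega) rfl,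
    Sum.inl b, hb, ?_⟩
  exact Or.inr ⟨evenly_of_eq hjk, fun h => hPne h.1⟩

/-- H7 : both blurred: every atom is in the composition. -/
lemma comp_all_two_blurs {X Y : Set (Atoms I)} {S Z : TwoSet I}
    (hX : (Eset I S \ X).Finite) (hY : (Eset I Z \ Y).Finite) (c : Hset I) :
    (Sum.inl c : Atoms I) ∈ cmComp I X Y := by
  obtain ⟨N1, hN1⟩ := good_of_cofinite hX
  obtain ⟨N2, hN2⟩ := good_of_cofinite hY
  set k := c.val.1 with hkk
  obtain ⟨P, hP⟩ := TwoSet.exists_mem S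
  obtain ⟨Q, hQ, hQne⟩ := TwoSet.exists_ne Z c.val.2.1
  set i := N1 + N2 + k + 1 with hii
  have he : evenly i (2 * i - k) k := by
    have h1 : evenly k (2 * i - k) i := evenly_of_eq (by omega)
    exact evenly_swap₂ (evenly_swap₁ (evenly_swap₂ h1))
  refine ⟨Sum.inl ⟨(i, P, S), hP⟩, hN1 _ (by show N1 < i; omega) rfl,
    Sum.inl ⟨(2 * i - k, Q, Z), hQ⟩, hN2 _ (by show N2 < 2 * i - k; omega) rfl, ?_⟩
  exact Or.inr ⟨he, fun h => hQne h.2⟩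

/-- Main left lemma: labels consistent and realized in `X`, `Y` force realization in the
composition. -/
lemma mlab_comp {X Y : Set (Atoms I)} {ℓ1 ℓ2 ℓ3 : Lab I} (hL : LCon I ℓ1 ℓ2 ℓ3)
    (h1 : Mlab (some ℓ1) X) (h2 : Mlab (some ℓ2) Y) : Mlab (some ℓ3) (cmComp I X Y) := by
  rcases ℓ1 with a | S
  · rcases ℓ2 with b | Z
    · rcases ℓ3 with c | V
      · -- all atoms
        exact ⟨Sum.inl a, h1, Sum.inl b, h2, hL⟩
      · -- atom atom blur: LCon gives empty triple intersection with V
        apply Set.Finite.subset Set.finite_empty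
        rintro w ⟨⟨x, rfl, hW⟩, hnc⟩
        refine hnc ⟨Sum.inl a, h1, Sum.inl b, h2, Or.inl ?_⟩
        rw [hW]
        exact hL
    · rcases ℓ3 with c | V
      · -- atom blur atom
        obtain ⟨b, hbZ, hbY⟩ := exists_mem_inter_of_cofinite h2
        refine ⟨Sum.inl a, h1, Sum.inl b, hbY, Or.inl ?_⟩
        rw [hbZ]
        exact hL
      · exact comp_cof_atom_blur h1 h2 V
  · rcases ℓ2 with b | Z
    · rcases ℓ3 with c | V
      · -- blur atom atom
        obtain ⟨a, haS, haX⟩ := exists_mem_inter_of_cofinite h1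
        refine ⟨Sum.inl a, haX, Sum.inl b, h2, Or.inl ?_⟩
        rw [haS]
        exact hL
      · exact comp_cof_blur_atom h1 h2 V
    · rcases ℓ3 with c | V
      · exact comp_all_two_blurs h1 h2 c
      · obtain ⟨a, -, haX⟩ := exists_mem_inter_of_cofinite h1
        exact comp_cof_atom_blur haX h2 V

/-- The set of `H`-atoms. -/
def Hatoms : Set (Atoms I) := {a | ∃ h : Hset I, a = Sum.inl h}

lemma cmComp_id_right (X : Set (Atoms I)) : cmComp I X {Sum.inr ()} = X := by
  ext c
  constructor
  · rintro ⟨a, ha, b, hb, hcon⟩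
    replace hb : b = Sum.inr () := hb
    subst hb
    rcases a with a' | u'
    · rw [conTriple_inr_mid] at hcon
      rwa [← hcon]
    · cases u'
      replace hcon := (conTriple_inr_left _ _).mp hcon
      rwa [← hcon]
  · intro hc
    rcases c with h | u
    · exact ⟨Sum.inl h, hc, Sum.inr (), rfl, (conTriple_inr_mid _ _).mpr rfl⟩
    · cases u
      exact ⟨Sum.inr (), hc, Sum.inr (), rfl, (conTriple_inr_left _ _).mpr rfl⟩

lemma cmComp_id_left (Y : Set (Atoms I)) : cmComp I {Sum.inr ()} Y = Y := by
  ext c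
  constructor
  · rintro ⟨a, ha, b, hb, hcon⟩
    replace ha : a = Sum.inr () := ha
    subst ha
    rw [conTriple_inr_left] at hcon
    rwa [← hcon]
  · intro hc
    exact ⟨Sum.inr (), rfl, c, hc, (conTriple_inr_left _ _).mpr rfl⟩

lemma cmComp_empty_right (X : Set (Atoms I)) : cmComp I X ∅ = ∅ := by
  ext c
  simp only [cmComp, Set.mem_setOf_eq, Set.mem_empty_iff_false, iff_false]
  rintro ⟨a, -, b, hb, -⟩
  exact hb

lemma cmComp_empty_left (Y : Set (Atoms I)) : cmComp I ∅ Y = ∅ := by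
  ext c
  simp only [cmComp, Set.mem_setOf_eq, Set.mem_empty_iff_false, iff_false]
  rintro ⟨a, ha, -⟩
  exact ha

lemma eq_id_of_no_atoms {Y : Set (Atoms I)} (h1 : ¬ ∃ b : Hset I, Sum.inl b ∈ Y)
    (h2 : Sum.inr () ∈ Y) : Y = {Sum.inr ()} := by
  ext a
  rcases a with h | u
  · show (Sum.inl h : Atoms I) ∈ Y ↔ (Sum.inl h : Atoms I) = Sum.inr ()
    constructor
    · intro hY; exact absurd ⟨h, hY⟩ h1
    · intro he; exact absurd he (by simp)
  · cases u
    show (Sum.inr () : Atoms I) ∈ Y ↔ (Sum.inr () : Atoms I) = Sum.inr ()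
    exact iff_of_true h2 rfl

lemma eq_empty_of_no_atoms {Y : Set (Atoms I)} (h1 : ¬ ∃ b : Hset I, Sum.inl b ∈ Y)
    (h2 : Sum.inr () ∉ Y) : Y = ∅ := by
  ext a
  rcases a with h | u
  · show (Sum.inl h : Atoms I) ∈ Y ↔ False
    simp only [iff_false]
    exact fun hY => h1 ⟨h, hY⟩
  · cases u
    show (Sum.inr () : Atoms I) ∈ Y ↔ False
    simp only [iff_false]
    exact h2

lemma hatoms_finite {X : Set (Atoms I)} (hX : X ∈ TermAlg I)
    (h : ∀ S : TwoSet I, ¬ (Eset I S \ X).Finite) : (X ∩ Hatoms).Finite := by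
  have hfin : ∀ S : TwoSet I, (X ∩ Eset I S).Finite := fun S => (hX S).resolve_right (h S)
  apply Set.Finite.subset (Set.finite_iUnion (fun S : TwoSet I => hfin S))
  rintro a ⟨haX, h', rfl⟩
  exact Set.mem_iUnion.mpr ⟨h'.val.2.2, haX, h', rfl, rfl⟩

lemma comp_inter_finite {X Y : Set (Atoms I)} {V : TwoSet I}
    (hXH : (X ∩ Hatoms).Finite) (hYH : (Y ∩ Hatoms).Finite)
    (hp : ∀ a b : Hset I, Sum.inl a ∈ X → Sum.inl b ∈ Y →
      a.val.2.2.val ∩ b.val.2.2.val ∩ V.val ≠ ∅) :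
    (cmComp I X Y ∩ Eset I V).Finite := by
  have key : cmComp I X Y ∩ Eset I V ⊆
      (X ∩ Eset I V) ∪ (Y ∩ Eset I V) ∪
      ⋃ (p : Atoms I × Atoms I) (_ : p ∈ (X ∩ Hatoms) ×ˢ (Y ∩ Hatoms)),
        {c | c ∈ Eset I V ∧ ConTriple I p.1 p.2 c} := by
    rintro c ⟨⟨a, ha, b, hb, hcon⟩, hcV⟩
    rcases a with a' | u
    · rcases b with b' | u
      · refine Or.inr (Set.mem_iUnion.mpr ⟨(Sum.inl a', Sum.inl b'), Set.mem_iUnion.mpr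
          ⟨⟨⟨ha, a', rfl⟩, ⟨hb, b', rfl⟩⟩, hcV, hcon⟩⟩)
      · cases u
        rw [conTriple_inr_mid] at hcon
        exact Or.inl (Or.inl ⟨hcon ▸ ha, hcV⟩)
    · cases u
      rw [conTriple_inr_left] at hcon
      exact Or.inl (Or.inr ⟨hcon ▸ hb, hcV⟩)
  apply Set.Finite.subset _ key
  apply Set.Finite.union
  · apply Set.Finite.union
    · exact hXH.subset (fun c ⟨h1, h2⟩ => ⟨h1, by obtain ⟨x, rfl, -⟩ := h2; exact ⟨x, rfl⟩⟩)
    · exact hYH.subset (fun c ⟨h1, h2⟩ => ⟨h1, by obtain ⟨x, rfl, -⟩ := h2; exact ⟨x, rfl⟩⟩)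
  · apply Set.Finite.biUnion (hXH.prod hYH)
    rintro ⟨pa, pb⟩ ⟨⟨haX, a, rfl⟩, hbY, b, rfl⟩
    apply Set.Finite.subset (finite_small_idx V (2 * (a.val.1 + b.val.1)))
    rintro c ⟨hcV, hcon⟩
    refine ⟨hcV, ?_⟩
    obtain ⟨x, rfl, hxV⟩ := hcV
    rcases hcon with hd | ⟨he, -⟩
    · exact absurd (by rwa [hxV] at hd) (hp a b haX hbY)
    · simp only [atomIdx, Sum.elim_inl]
      exact evenly_bound he

lemma comp_cof_pair {X Y : Set (Atoms I)} {V : TwoSet I} {a b : Hset I}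
    (ha : Sum.inl a ∈ X) (hb : Sum.inl b ∈ Y)
    (hd : a.val.2.2.val ∩ b.val.2.2.val ∩ V.val = ∅) :
    (Eset I V \ cmComp I X Y).Finite := by
  apply Set.Finite.subset Set.finite_empty
  rintro c ⟨⟨x, rfl, hxV⟩, hnc⟩
  exact hnc ⟨Sum.inl a, ha, Sum.inl b, hb, Or.inl (by rw [hxV]; exact hd)⟩

lemma univ_mem_tm : Set.univ ∈ TermAlg I := fun W =>
  Or.inr (by rw [Set.diff_univ]; exact Set.finite_empty)

lemma id_mem_tm : {(Sum.inr () : Atoms I)} ∈ TermAlg I := fun W => by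
  left
  apply Set.Finite.subset Set.finite_empty
  rintro a ⟨ha, hE⟩
  replace ha : a = Sum.inr () := ha
  subst ha
  exact notmem_Eset_inr hE

lemma union_mem_tm {X Y : Set (Atoms I)} (hX : X ∈ TermAlg I) (hY : Y ∈ TermAlg I) :
    X ∪ Y ∈ TermAlg I := by
  intro W
  rcases hX W with h1 | h1
  · rcases hY W with h2 | h2
    · left
      rw [Set.union_inter_distrib_right]
      exact h1.union h2
    · exact Or.inr (h2.subset (Set.diff_subset_diff_right Set.subset_union_right))
  · exact Or.inr (h1.subset (Set.diff_subset_diff_right Set.subset_union_left))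

lemma compl_mem_tm {X : Set (Atoms I)} (hX : X ∈ TermAlg I) : Xᶜ ∈ TermAlg I := by
  intro W
  rcases hX W with h1 | h1
  · right
    apply h1.subset
    rintro a ⟨haE, hac⟩
    exact ⟨not_not.mp (fun h => hac h), haE⟩
  · left
    apply h1.subset
    rintro a ⟨hac, haE⟩
    exact ⟨haE, hac⟩

lemma comp_mem_tm {X Y : Set (Atoms I)} (hX : X ∈ TermAlg I) (hY : Y ∈ TermAlg I) :
    cmComp I X Y ∈ TermAlg I := by
  intro V
  by_cases hbX : ∃ S, (Eset I S \ X).Finite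
  · obtain ⟨S, hS⟩ := hbX
    by_cases hbHY : ∃ b : Hset I, Sum.inl b ∈ Y
    · obtain ⟨b, hb⟩ := hbHY
      exact Or.inr (comp_cof_blur_atom hS hb V)
    · by_cases hId : Sum.inr () ∈ Y
      · rw [eq_id_of_no_atoms hbHY hId, cmComp_id_right]
        exact hX V
      · rw [eq_empty_of_no_atoms hbHY hId, cmComp_empty_right]
        exact Or.inl (by simp)
  · by_cases hbY : ∃ Z, (Eset I Z \ Y).Finite
    · obtain ⟨Z, hZ⟩ := hbY
      by_cases hbHX : ∃ a : Hset I, Sum.inl a ∈ X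
      · obtain ⟨a, ha⟩ := hbHX
        exact Or.inr (comp_cof_atom_blur ha hZ V)
      · by_cases hId : Sum.inr () ∈ X
        · rw [eq_id_of_no_atoms hbHX hId, cmComp_id_left]
          exact hY V
        · rw [eq_empty_of_no_atoms hbHX hId, cmComp_empty_left]
          exact Or.inl (by simp)
    · push_neg at hbX hbY
      by_cases hp : ∃ a b : Hset I, Sum.inl a ∈ X ∧ Sum.inl b ∈ Y ∧
          a.val.2.2.val ∩ b.val.2.2.val ∩ V.val = ∅
      · obtain ⟨a, b, ha, hb, hd⟩ := hp
        exact Or.inr (comp_cof_pair ha hb hd)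
      · push_neg at hp
        exact Or.inl (comp_inter_finite (hatoms_finite hX hbX) (hatoms_finite hY hbY)
          (fun a b ha hb => Finset.nonempty_iff_ne_empty.mp (hp a b ha hb)))

/-- The edge labeling including the diagonal. -/
noncomputable def lab (f : ℕ → Req I) (x y : ℕ) : Option (Lab I) :=
  if x = y then none else some (edge f x y)

lemma lab_symm (f : ℕ → Req I) (x y : ℕ) : lab f x y = lab f y x := by
  unfold lab
  by_cases h : x = y
  · rw [if_pos h, if_pos h.symm]
  · rw [if_neg h, if_neg (Ne.symm h), edge_symm]

/-- The candidate representation. -/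
def hrep (f : ℕ → Req I) (X : Set (Atoms I)) : Set (ℕ × ℕ) :=
  {p : ℕ × ℕ | Mlab (lab f p.1 p.2) X}

lemma mlab_univ (ℓ : Option (Lab I)) : Mlab ℓ Set.univ := by
  rcases ℓ with - | ℓ'
  · trivial
  · rcases ℓ' with h | W
    · trivial
    · show (Eset I W \ Set.univ).Finite
      rw [Set.diff_univ]
      exact Set.finite_empty

lemma mlab_empty (ℓ : Option (Lab I)) : ¬ Mlab ℓ (∅ : Set (Atoms I)) := by
  rcases ℓ with - | ℓ'
  · exact id
  · rcases ℓ' with h | W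
    · exact id
    · show ¬ (Eset I W \ ∅).Finite
      rw [Set.diff_empty]
      exact Eset_infinite W

lemma mlab_union {X Y : Set (Atoms I)} (hX : X ∈ TermAlg I) (hY : Y ∈ TermAlg I)
    (ℓ : Option (Lab I)) : Mlab ℓ (X ∪ Y) ↔ Mlab ℓ X ∨ Mlab ℓ Y := by
  rcases ℓ with - | ℓ'
  · exact Set.mem_union _ _ _
  · rcases ℓ' with h | W
    · exact Set.mem_union _ _ _
    · show (Eset I W \ (X ∪ Y)).Finite ↔ (Eset I W \ X).Finite ∨ (Eset I W \ Y).Finite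
      constructor
      · intro h
        by_contra hc
        push_neg at hc
        have h1 : (X ∩ Eset I W).Finite := (hX W).resolve_right hc.1
        have h2 : (Y ∩ Eset I W).Finite := (hY W).resolve_right hc.2
        apply Eset_infinite W
        apply Set.Finite.subset ((h.union h1).union h2)
        intro a ha
        by_cases haX : a ∈ X
        · exact Or.inl (Or.inr ⟨haX, ha⟩)
        · by_cases haY : a ∈ Y
          · exact Or.inr ⟨haY, ha⟩
          · exact Or.inl (Or.inl ⟨ha, fun hc => hc.elim haX haY⟩)
      · rintro (h | h)
        · exact h.subset (Set.diff_subset_diff_right Set.subset_union_left)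
        · exact h.subset (Set.diff_subset_diff_right Set.subset_union_right)

lemma mlab_compl {X : Set (Atoms I)} (hX : X ∈ TermAlg I) (ℓ : Option (Lab I)) :
    Mlab ℓ Xᶜ ↔ ¬ Mlab ℓ X := by
  rcases ℓ with - | ℓ'
  · exact Iff.rfl
  · rcases ℓ' with h | W
    · exact Iff.rfl
    · show (Eset I W \ Xᶜ).Finite ↔ ¬ (Eset I W \ X).Finite
      constructor
      · intro h1 h2
        apply Eset_infinite W
        apply Set.Finite.subset (h2.union h1)
        intro a ha
        by_cases haX : a ∈ X
        · exact Or.inr ⟨ha, fun hc => hc haX⟩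
        · exact Or.inl ⟨ha, haX⟩
      · intro h
        have h1 : (X ∩ Eset I W).Finite := (hX W).resolve_right h
        apply h1.subset
        rintro a ⟨haE, hac⟩
        exact ⟨not_not.mp (fun hc => hac hc), haE⟩

lemma mlab_id_some (ℓ' : Lab I) : ¬ Mlab (some ℓ') {(Sum.inr () : Atoms I)} := by
  rcases ℓ' with h | W
  · intro hc
    rw [Mlab] at hc
    replace hc : (Sum.inl h : Atoms I) = Sum.inr () := hc
    exact Sum.inl_ne_inr hc
  · intro hc
    rw [Mlab] at hc
    exact ((Eset_infinite W).diff (Set.finite_singleton _)) hc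

lemma comp_dir_left {f : ℕ → Req I} {X Y : Set (Atoms I)} {x z y : ℕ}
    (hMX : Mlab (lab f x y) X) (hMY : Mlab (lab f y z) Y) :
    Mlab (lab f x z) (cmComp I X Y) := by
  by_cases hxy : x = y
  · subst hxy
    rw [lab, if_pos rfl] at hMX
    by_cases hxz : x = z
    · subst hxz
      rw [lab, if_pos rfl] at hMY ⊢
      exact ⟨Sum.inr (), hMX, Sum.inr (), hMY, (conTriple_inr_left _ _).mpr rfl⟩
    · rw [lab, if_neg hxz] at hMY ⊢
      rcases hE : edge f x z with c | V <;> rw [hE] at hMY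
      · exact ⟨Sum.inr (), hMX, Sum.inl c, hMY, (conTriple_inr_left _ _).mpr rfl⟩
      · apply hMY.subset
        rintro a ⟨haE, hac⟩
        exact ⟨haE, fun haY => hac ⟨Sum.inr (), hMX, a, haY, (conTriple_inr_left _ _).mpr rfl⟩⟩
  · by_cases hyz : y = z
    · subst hyz
      rw [lab, if_pos rfl] at hMY
      rw [lab, if_neg hxy] at hMX ⊢
      rcases hE : edge f x y with c | V <;> rw [hE] at hMX
      · exact ⟨Sum.inl c, hMX, Sum.inr (), hMY, (conTriple_inr_mid _ _).mpr rfl⟩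
      · apply hMX.subset
        rintro a ⟨haE, hac⟩
        refine ⟨haE, fun haX => ?_⟩
        obtain ⟨w, rfl, -⟩ := haE
        exact hac ⟨Sum.inl w, haX, Sum.inr (), hMY, (conTriple_inr_mid _ _).mpr rfl⟩
    · by_cases hxz : x = z
      · subst hxz
        rw [lab, if_pos rfl]
        rw [lab, if_neg hxy] at hMX
        rw [lab, if_neg (Ne.symm hxy), edge_symm] at hMY
        rcases hE : edge f x y with a | S <;> rw [hE] at hMX hMY
        · exact ⟨Sum.inl a, hMX, Sum.inl a, hMY, (conTriple_inr_right _ _).mpr rfl⟩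
        · have hXY : (Eset I S \ (X ∩ Y)).Finite := by
            rw [Set.diff_inter]
            exact hMX.union hMY
          obtain ⟨c, -, hc⟩ := exists_mem_inter_of_cofinite hXY
          exact ⟨Sum.inl c, hc.1, Sum.inl c, hc.2, (conTriple_inr_right _ _).mpr rfl⟩
      · rw [lab, if_neg hxy] at hMX
        rw [lab, if_neg hyz] at hMY
        rw [lab, if_neg hxz]
        exact mlab_comp (triangle f hxy hyz hxz) hMX hMY

lemma comp_dir_right (hI : 6 ≤ Fintype.card I) {f : ℕ → Req I}
    (hf : ∀ (r : Req I) (N : ℕ), ∃ n, N < n ∧ f n = r)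
    {X Y : Set (Atoms I)} (hX : X ∈ TermAlg I) (hY : Y ∈ TermAlg I) {x z : ℕ}
    (hM : Mlab (lab f x z) (cmComp I X Y)) :
    ∃ y, Mlab (lab f x y) X ∧ Mlab (lab f y z) Y := by
  by_cases hxz : x = z
  · subst hxz
    rw [lab, if_pos rfl] at hM
    obtain ⟨a, ha, b, hb, hcon⟩ := hM
    rcases a with a' | u
    · rcases b with b' | u
      · rw [conTriple_inr_right] at hcon
        obtain rfl : a' = b' := Sum.inl.inj hcon
        obtain ⟨y, hxy, hE⟩ := sat0 hI hf x (Sum.inl a')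
        refine ⟨y, ?_, ?_⟩
        · rw [lab, if_neg hxy, hE]
          exact ha
        · rw [lab, if_neg (fun h => hxy h.symm), edge_symm, hE]
          exact hb
      · cases u
        replace hcon := (conTriple_inr_mid _ _).mp hcon
        exact absurd hcon (by simp)
    · cases u
      replace hcon := (conTriple_inr_left _ _).mp hcon
      subst hcon
      exact ⟨x, by rw [lab, if_pos rfl]; exact ha, by rw [lab, if_pos rfl]; exact hb⟩
  · rw [lab, if_neg hxz] at hM
    rcases hE : edge f x z with c | V <;> rw [hE] at hM
    · -- ℓ3 is an atom
      obtain ⟨a, ha, b, hb, hcon⟩ := hM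
      rcases a with a' | u
      · rcases b with b' | u
        · -- both atoms : exact saturation
          have hL : LCon I (Sum.inl a') (Sum.inl b') (edge f x z) := by
            rw [hE]
            exact hcon
          obtain ⟨y, hxy, hzy, he1, he2⟩ := sat hI hf hxz hL
          refine ⟨y, ?_, ?_⟩
          · rw [lab, if_neg hxy, he1]; exact ha
          · rw [lab, if_neg (Ne.symm hzy), he2]; exact hb
        · cases u
          replace hcon := (conTriple_inr_mid _ _).mp hcon
          obtain rfl : a' = c := Sum.inl.inj hcon
          refine ⟨z, ?_, by rw [lab, if_pos rfl]; exact hb⟩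
          rw [lab, if_neg hxz, hE]
          exact ha
      · cases u
        replace hcon := (conTriple_inr_left _ _).mp hcon
        subst hcon
        refine ⟨x, by rw [lab, if_pos rfl]; exact ha, ?_⟩
        rw [lab, if_neg hxz, hE]
        exact hb
    · -- ℓ3 is a blur V
      by_cases hbX : ∃ S, (Eset I S \ X).Finite
      · obtain ⟨S, hS⟩ := hbX
        by_cases hbHY : ∃ b : Hset I, Sum.inl b ∈ Y
        · obtain ⟨b, hb⟩ := hbHY
          have hL : LCon I (Sum.inr S) (Sum.inl b) (edge f x z) := by rw [hE]; trivial
          obtain ⟨y, hxy, hzy, he1, he2⟩ := sat hI hf hxz hL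
          refine ⟨y, ?_, ?_⟩
          · rw [lab, if_neg hxy, he1]; exact hS
          · rw [lab, if_neg (Ne.symm hzy), he2]; exact hb
        · by_cases hId : Sum.inr () ∈ Y
          · rw [eq_id_of_no_atoms hbHY hId, cmComp_id_right] at hM
            refine ⟨z, ?_, by rw [lab, if_pos rfl]; exact hId⟩
            rw [lab, if_neg hxz, hE]
            exact hM
          · rw [eq_empty_of_no_atoms hbHY hId, cmComp_empty_right] at hM
            exact absurd (hM.subset (fun a ha => ⟨ha, Set.notMem_empty a⟩)) (Eset_infinite V)
      · by_cases hbY : ∃ Z, (Eset I Z \ Y).Finite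
        · obtain ⟨Z, hZ⟩ := hbY
          by_cases hbHX : ∃ a : Hset I, Sum.inl a ∈ X
          · obtain ⟨a, ha⟩ := hbHX
            have hL : LCon I (Sum.inl a) (Sum.inr Z) (edge f x z) := by rw [hE]; trivial
            obtain ⟨y, hxy, hzy, he1, he2⟩ := sat hI hf hxz hL
            refine ⟨y, ?_, ?_⟩
            · rw [lab, if_neg hxy, he1]; exact ha
            · rw [lab, if_neg (Ne.symm hzy), he2]; exact hZ
          · by_cases hId : Sum.inr () ∈ X
            · rw [eq_id_of_no_atoms hbHX hId, cmComp_id_left] at hM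
              refine ⟨x, by rw [lab, if_pos rfl]; exact hId, ?_⟩
              rw [lab, if_neg hxz, hE]
              exact hM
            · rw [eq_empty_of_no_atoms hbHX hId, cmComp_empty_left] at hM
              exact absurd (hM.subset (fun a ha => ⟨ha, Set.notMem_empty a⟩)) (Eset_infinite V)
        · push_neg at hbX hbY
          by_cases hp : ∃ a b : Hset I, Sum.inl a ∈ X ∧ Sum.inl b ∈ Y ∧
              a.val.2.2.val ∩ b.val.2.2.val ∩ V.val = ∅
          · obtain ⟨a, b, ha, hb, hd⟩ := hp
            have hL : LCon I (Sum.inl a) (Sum.inl b) (edge f x z) := by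
              rw [hE]
              exact hd
            obtain ⟨y, hxy, hzy, he1, he2⟩ := sat hI hf hxz hL
            refine ⟨y, ?_, ?_⟩
            · rw [lab, if_neg hxy, he1]; exact ha
            · rw [lab, if_neg (Ne.symm hzy), he2]; exact hb
          · push_neg at hp
            exfalso
            have hfin := comp_inter_finite (hatoms_finite hX hbX) (hatoms_finite hY hbY)
              (fun a b ha hb => Finset.nonempty_iff_ne_empty.mp (hp a b ha hb))
            apply Eset_infinite V
            apply Set.Finite.subset (hfin.union hM)
            intro a ha
            by_cases hac : a ∈ cmComp I X Y
            · exact Or.inl ⟨hac, ha⟩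
            · exact Or.inr ⟨ha, hac⟩

lemma final_rep (hI : 6 ≤ Fintype.card I) :
    ∃ (B : Type) (E : B → B → Prop), Equivalence E ∧
      ∃ h : Set (Atoms I) → Set (B × B),
        (∀ X ∈ TermAlg I, ∀ Y ∈ TermAlg I, h X = h Y → X = Y) ∧
        (∀ X ∈ TermAlg I, h X ⊆ {p : B × B | E p.1 p.2}) ∧
        h Set.univ = {p : B × B | E p.1 p.2} ∧
        h ∅ = ∅ ∧
        (∀ X ∈ TermAlg I, ∀ Y ∈ TermAlg I, h (X ∪ Y) = h X ∪ h Y) ∧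
        (∀ X ∈ TermAlg I, h Xᶜ = {p : B × B | E p.1 p.2} \ h X) ∧
        (∀ X ∈ TermAlg I, ∀ Y ∈ TermAlg I, h (cmComp I X Y) =
          {p : B × B | E p.1 p.2 ∧ ∃ y, (p.1, y) ∈ h X ∧ (y, p.2) ∈ h Y}) ∧
        (∀ X ∈ TermAlg I, h (id X) = {p : B × B | (p.2, p.1) ∈ h X}) ∧
        h {(Sum.inr () : Atoms I)} = {p : B × B | E p.1 p.2 ∧ p.1 = p.2} := by
  obtain ⟨f, hf⟩ := exists_stream hI
  refine ⟨ℕ, fun _ _ => True,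
    ⟨fun _ => trivial, fun _ => trivial, fun _ _ => trivial⟩, hrep f,
    ?_, ?_, ?_, ?_, ?_, ?_, ?_, ?_, ?_⟩
  · -- injectivity
    intro X hX Y hY hEq
    ext a
    rcases a with h | u
    · obtain ⟨y, hxy, hE⟩ := sat0 hI hf 0 (Sum.inl h)
      have h3 := Set.ext_iff.mp hEq (0, y)
      simp only [hrep, Set.mem_setOf_eq, lab, if_neg hxy, hE] at h3
      exact h3
    · cases u
      have h3 := Set.ext_iff.mp hEq (0, 0)
      simp only [hrep, Set.mem_setOf_eq, lab, if_pos rfl] at h3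
      exact h3
  · intro X _ p _
    trivial
  · ext p
    exact iff_of_true (mlab_univ _) trivial
  · ext p
    exact iff_of_false (mlab_empty _) (Set.notMem_empty p)
  · intro X hX Y hY
    ext p
    exact mlab_union hX hY _
  · intro X hX
    ext p
    constructor
    · intro h
      exact ⟨trivial, (mlab_compl hX _).mp h⟩
    · rintro ⟨-, h⟩
      exact (mlab_compl hX _).mpr h
  · intro X hX Y hY
    ext ⟨x, z⟩
    constructor
    · intro h
      exact ⟨trivial, comp_dir_right hI hf hX hY h⟩
    · rintro ⟨-, y, h1, h2⟩
      exact comp_dir_left h1 h2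
  · intro X hX
    ext ⟨x, z⟩
    show Mlab (lab f x z) X ↔ Mlab (lab f z x) X
    rw [lab_symm]
  · ext ⟨x, z⟩
    constructor
    · intro h
      by_cases hxz : x = z
      · exact ⟨trivial, hxz⟩
      · exfalso
        have h' : Mlab (lab f x z) {(Sum.inr () : Atoms I)} := h
        rw [lab, if_neg hxz] at h'
        exact mlab_id_some _ h'
    · rintro ⟨-, hxz⟩
      show Mlab (lab f x z) {(Sum.inr () : Atoms I)}
      rw [lab, if_pos hxz]
      exact rfl

end Labels

/-- the term algebra over the blown-up-and-blurred atom structure is closed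
under the operations of `Cm F`, contains the unit and the identity, and the resulting
relation-type algebra is representable. -/
theorem termAlg_closed_and_representable (I : Type) [Fintype I] [DecidableEq I]
    (hI : 6 ≤ Fintype.card I) :
    (Set.univ ∈ TermAlg I) ∧
    ({(Sum.inr () : Atoms I)} ∈ TermAlg I) ∧
    (∀ X ∈ TermAlg I, ∀ Y ∈ TermAlg I, X ∪ Y ∈ TermAlg I) ∧
    (∀ X ∈ TermAlg I, Xᶜ ∈ TermAlg I) ∧
    (∀ X ∈ TermAlg I, ∀ Y ∈ TermAlg I, cmComp I X Y ∈ TermAlg I) ∧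
    (∀ X ∈ TermAlg I, (cmAlg I).conv X ∈ TermAlg I) ∧
    (∃ (B : Type) (E : B → B → Prop), Equivalence E ∧
      ∃ h : Set (Atoms I) → Set (B × B),
        (∀ X ∈ TermAlg I, ∀ Y ∈ TermAlg I, h X = h Y → X = Y) ∧
        (∀ X ∈ TermAlg I, h X ⊆ {p : B × B | E p.1 p.2}) ∧
        h Set.univ = {p : B × B | E p.1 p.2} ∧
        h ∅ = ∅ ∧
        (∀ X ∈ TermAlg I, ∀ Y ∈ TermAlg I, h (X ∪ Y) = h X ∪ h Y) ∧
        (∀ X ∈ TermAlg I, h Xᶜ = {p : B × B | E p.1 p.2} \ h X) ∧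
        (∀ X ∈ TermAlg I, ∀ Y ∈ TermAlg I, h (cmComp I X Y) =
          {p : B × B | E p.1 p.2 ∧ ∃ y, (p.1, y) ∈ h X ∧ (y, p.2) ∈ h Y}) ∧
        (∀ X ∈ TermAlg I, h ((cmAlg I).conv X) = {p : B × B | (p.2, p.1) ∈ h X}) ∧
        h {(Sum.inr () : Atoms I)} = {p : B × B | E p.1 p.2 ∧ p.1 = p.2}) := by
  refine ⟨univ_mem_tm, id_mem_tm, fun X hX Y hY => union_mem_tm hX hY,
    fun X hX => compl_mem_tm hX, fun X hX Y hY => comp_mem_tm hX hY,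
    fun X hX => hX, ?_⟩
  exact final_rep hI
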